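/- Let n ≥ 1, θ ∈ ℝⁿ, q ≥ 1 an integer, and let ν be the uniform probability measure on the unit ℓ¹-ball B₁ⁿ. Then ∫ |⟨x, θ⟩|^{2q} dν(x) ≤ C(n,q) · n! · (2q)! · α^{2q} / ((n+2q)! · n^q), where α = √n · ‖θ‖_∞ and C(n,q) = binom(n+q−1, n−1). -/

import Mathlib

open MeasureTheory Real Set Finset
open scoped Nat ENNReal

noncomputable def cc (j : ℕ) : ℝ := if Even j then 2 * (j ! : ℝ) else 0

lemma myIntOn (j : ℕ) : IntegrableOn (fun t : ℝ => t ^ j * Real.exp (-|t|)) (Set.Ioi 0) := by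
  have h := Real.GammaIntegral_convergent (s := j + 1) (by positivity)
  refine h.congr_fun (fun x hx => ?_) measurableSet_Ioi
  rw [abs_of_pos hx, add_sub_cancel_right]; dsimp only; rw [Real.rpow_natCast, mul_comm]
lemma myVal (j : ℕ) : ∫ t in Set.Ioi (0:ℝ), t ^ j * Real.exp (-|t|) = (j ! : ℝ) := by
  have h := Real.Gamma_eq_integral (s := j + 1) (by positivity)
  rw [Real.Gamma_nat_eq_factorial j] at h
  rw [h]
  refine setIntegral_congr_fun measurableSet_Ioi (fun x hx => ?_)
  rw [abs_of_pos hx, add_sub_cancel_right, Real.rpow_natCast, mul_comm]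

lemma myIntOnIic (j : ℕ) : IntegrableOn (fun t : ℝ => t ^ j * Real.exp (-|t|)) (Set.Iic 0) := by
  have A : MeasurableEmbedding (fun x : ℝ => -x) :=
    (Homeomorph.neg ℝ).isClosedEmbedding.measurableEmbedding
  have h1 : IntegrableOn (fun x : ℝ => ((-x) ^ j * Real.exp (-|(-x)|))) (Set.Ici 0) := by
    rw [integrableOn_Ici_iff_integrableOn_Ioi]
    refine IntegrableOn.congr_fun ((myIntOn j).const_mul ((-1 : ℝ) ^ j))
      (fun x hx => ?_) measurableSet_Ioi
    rw [abs_neg]; ring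
  unfold IntegrableOn
  rw [← Measure.map_neg_eq_self (volume : Measure ℝ), Measure.restrict_map A.measurable
    measurableSet_Iic, A.integrable_map_iff]
  have hs : (fun x : ℝ => -x) ⁻¹' (Set.Iic 0) = Set.Ici 0 := by ext x; simp
  rw [hs]
  exact h1
lemma myInt (j : ℕ) : Integrable (fun t : ℝ => t ^ j * Real.exp (-|t|)) := by
  rw [← integrableOn_univ, ← Set.Iic_union_Ioi (a := (0:ℝ)), integrableOn_union]
  exact ⟨myIntOnIic j, myIntOn j⟩
lemma myValFull (j : ℕ) : ∫ t : ℝ, t ^ j * Real.exp (-|t|) = cc j := by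
  rw [cc]
  rw [← intervalIntegral.integral_Iic_add_Ioi (myIntOnIic j) (myIntOn j), myVal]
  have h2 : ∫ t in Set.Iic (0:ℝ), t ^ j * Real.exp (-|t|) = (-1) ^ j * (j ! : ℝ) := by
    rw [show (0:ℝ) = -0 by ring, ← integral_comp_neg_Ioi]
    have : ∀ x ∈ Set.Ioi (0:ℝ), (-x) ^ j * Real.exp (-|(-x)|)
        = (-1) ^ j * (x ^ j * Real.exp (-|x|)) := by
      intro x hx; rw [abs_neg]; ring
    rw [setIntegral_congr_fun measurableSet_Ioi this, integral_const_mul, myVal]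
  rw [h2]
  rcases Nat.even_or_odd j with he | ho
  · rw [if_pos he, he.neg_one_pow]; ring
  · rw [if_neg (Nat.not_even_iff_odd.mpr ho), ho.neg_one_pow]; ring


lemma term_int (n : ℕ) (θ : Fin n → ℝ) (k : Fin n → ℕ) :
    Integrable (fun x : Fin n → ℝ => ∏ i, ((x i * θ i) ^ k i * Real.exp (-|x i|))) ∧
    ∫ x : Fin n → ℝ, ∏ i, ((x i * θ i) ^ k i * Real.exp (-|x i|))
      = ∏ i, (θ i ^ k i * cc (k i)) := by
  have hfun : ∀ i : Fin n, (fun t : ℝ => (t * θ i) ^ k i * Real.exp (-|t|))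
      = fun t => θ i ^ k i * (t ^ k i * Real.exp (-|t|)) := by
    intro i; funext t; rw [mul_pow]; ring
  have hi : ∀ i : Fin n, Integrable (fun t : ℝ => (t * θ i) ^ k i * Real.exp (-|t|)) := by
    intro i; rw [hfun i]; exact (myInt (k i)).const_mul _
  refine ⟨Integrable.fintype_prod hi, ?_⟩
  rw [MeasureTheory.integral_fintype_prod_volume_eq_prod (f := fun i t => (t * θ i) ^ k i * Real.exp (-|t|))]
  refine Finset.prod_congr rfl fun i _ => ?_
  rw [hfun i, integral_const_mul, myValFull]

lemma expansion (n q : ℕ) (θ : Fin n → ℝ) :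
    Integrable (fun x : Fin n → ℝ => (∑ i, x i * θ i) ^ (2*q) * Real.exp (-∑ i, |x i|)) ∧
    ∫ x : Fin n → ℝ, (∑ i, x i * θ i) ^ (2*q) * Real.exp (-∑ i, |x i|)
      = ∑ k ∈ Finset.piAntidiag Finset.univ (2*q),
          (Nat.multinomial Finset.univ k : ℝ) * ∏ i, (θ i ^ k i * cc (k i)) := by
  have key : (fun x : Fin n → ℝ => (∑ i, x i * θ i) ^ (2*q) * Real.exp (-∑ i, |x i|))
      = fun x => ∑ k ∈ Finset.piAntidiag Finset.univ (2*q),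
          (Nat.multinomial Finset.univ k : ℝ) *
            ∏ i, ((x i * θ i) ^ k i * Real.exp (-|x i|)) := by
    funext x
    rw [Finset.sum_pow_eq_sum_piAntidiag, Finset.sum_mul]
    refine Finset.sum_congr rfl fun k hk => ?_
    rw [← Finset.sum_neg_distrib, Real.exp_sum, mul_assoc, ← Finset.prod_mul_distrib]
  constructor
  · rw [key]
    exact integrable_finset_sum _ fun k _ => ((term_int n θ k).1.const_mul _)
  · rw [key, integral_finset_sum _ fun k _ => ((term_int n θ k).1.const_mul _)]
    refine Finset.sum_congr rfl fun k _ => ?_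
    rw [integral_const_mul, (term_int n θ k).2]

lemma sum_bound (n q : ℕ) (hn : 1 ≤ n) (θ : Fin n → ℝ) (M : ℝ) (hM : ∀ i, |θ i| ≤ M) :
    ∑ k ∈ Finset.piAntidiag Finset.univ (2*q),
        (Nat.multinomial Finset.univ k : ℝ) * ∏ i, (θ i ^ k i * cc (k i))
      ≤ (Nat.choose (n + q - 1) q : ℝ) * (2:ℝ)^n * ((2*q)! : ℝ) * M^(2*q) := by
  haveI : NeZero n := ⟨by omega⟩
  have hM0 : 0 ≤ M := (abs_nonneg _).trans (hM 0)
  set T : (Fin n → ℕ) → ℝ := fun k =>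
    (Nat.multinomial Finset.univ k : ℝ) * ∏ i, (θ i ^ k i * cc (k i)) with hT
  have h0 : ∀ k ∈ Finset.piAntidiag Finset.univ (2*q), T k ≠ 0 → (∀ i, 2 ∣ k i) := by
    intro k _ hne
    by_contra hodd
    push_neg at hodd
    obtain ⟨i, hi⟩ := hodd
    refine hne ?_
    have : cc (k i) = 0 := by
      rw [cc, if_neg]
      intro he; exact hi he.two_dvd
    rw [hT]
    simp only
    rw [Finset.prod_eq_zero (Finset.mem_univ i) (by rw [this, mul_zero]), mul_zero]
  rw [← Finset.sum_filter_of_ne h0]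
  have hcard : ((Finset.piAntidiag (Finset.univ : Finset (Fin n)) (2*q)).filter
      (fun k => ∀ i, 2 ∣ k i)).card = Nat.choose (n + q - 1) q := by
    have h := Finset.map_nsmul_piAntidiag_univ (ι := Fin n) q two_ne_zero
    have e : ((Finset.piAntidiag (Finset.univ : Finset (Fin n)) (2*q)).filter
        (fun k => ∀ i, 2 ∣ k i)) = Finset.map
          ⟨fun x => 2 • x, fun _ _ hxy => funext fun i => by
            have := congrFun hxy i
            simpa using this⟩ (Finset.piAntidiag (Finset.univ : Finset (Fin n)) q) := by
      rw [h]
      ext k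
      simp [Finset.mem_filter]
    rw [e, Finset.card_map, ← Finset.map_sym_eq_piAntidiag Finset.univ q, Finset.card_map,
      Finset.sym_univ, Finset.card_univ, Sym.card_sym_eq_choose, Fintype.card_fin]
  have hbound : ∀ k ∈ (Finset.piAntidiag (Finset.univ : Finset (Fin n)) (2*q)).filter
      (fun k => ∀ i, 2 ∣ k i), T k ≤ (2:ℝ)^n * ((2*q)! : ℝ) * M^(2*q) := by
    intro k hk
    rw [Finset.mem_filter, Finset.mem_piAntidiag] at hk
    obtain ⟨⟨hsum, -⟩, hdvd⟩ := hk
    have heven : ∀ i, Even (k i) := fun i => (even_iff_two_dvd).2 (hdvd i)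
    have hcc : ∀ i, cc (k i) = 2 * ((k i)! : ℝ) := fun i => if_pos (heven i)
    have hprod : ∏ i, (θ i ^ k i * cc (k i))
        = (∏ i, θ i ^ k i) * ((2:ℝ)^n * ∏ i, ((k i)! : ℝ)) := by
      simp_rw [hcc]
      rw [Finset.prod_mul_distrib, Finset.prod_mul_distrib, Finset.prod_const,
        Finset.card_univ, Fintype.card_fin]
    have hθ : ∏ i, θ i ^ k i ≤ M ^ (2*q) := by
      rw [← hsum, ← Finset.prod_pow_eq_pow_sum]
      refine Finset.prod_le_prod (fun i _ => (heven i).pow_nonneg _) (fun i _ => ?_)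
      rw [← (heven i).pow_abs]
      exact pow_le_pow_left₀ (abs_nonneg _) (hM i) _
    have hmult : (Nat.multinomial Finset.univ k : ℝ) * ∏ i, ((k i)! : ℝ) = ((2*q)! : ℝ) := by
      rw [← Nat.cast_prod, ← Nat.cast_mul, mul_comm, Nat.multinomial_spec, hsum]
    calc T k = (∏ i, θ i ^ k i) *
          ((Nat.multinomial Finset.univ k : ℝ) * ∏ i, ((k i)! : ℝ)) * (2:ℝ)^n := by
          rw [hT]; simp only; rw [hprod]; ring
      _ = (∏ i, θ i ^ k i) * ((2*q)! : ℝ) * (2:ℝ)^n := by rw [hmult]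
      _ ≤ M^(2*q) * ((2*q)! : ℝ) * (2:ℝ)^n := by
          have h1 : (0:ℝ) ≤ ((2*q)! : ℝ) * (2:ℝ)^n := by positivity
          calc (∏ i, θ i ^ k i) * ((2*q)! : ℝ) * (2:ℝ)^n
              = (∏ i, θ i ^ k i) * (((2*q)! : ℝ) * (2:ℝ)^n) := by ring
            _ ≤ M^(2*q) * (((2*q)! : ℝ) * (2:ℝ)^n) := mul_le_mul_of_nonneg_right hθ h1
            _ = M^(2*q) * ((2*q)! : ℝ) * (2:ℝ)^n := by ring
      _ = (2:ℝ)^n * ((2*q)! : ℝ) * M^(2*q) := by ring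
  calc ∑ k ∈ (Finset.piAntidiag (Finset.univ : Finset (Fin n)) (2*q)).filter
        (fun k => ∀ i, 2 ∣ k i), T k
      ≤ ((Finset.piAntidiag (Finset.univ : Finset (Fin n)) (2*q)).filter
        (fun k => ∀ i, 2 ∣ k i)).card • ((2:ℝ)^n * ((2*q)! : ℝ) * M^(2*q)) :=
        Finset.sum_le_card_nsmul _ _ _ hbound
    _ = (Nat.choose (n + q - 1) q : ℝ) * ((2:ℝ)^n * ((2*q)! : ℝ) * M^(2*q)) := by
        rw [hcard, nsmul_eq_mul]
    _ = (Nat.choose (n + q - 1) q : ℝ) * (2:ℝ)^n * ((2*q)! : ℝ) * M^(2*q) := by ring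

lemma stepA (n q : ℕ) (hn : 1 ≤ n) (θ : Fin n → ℝ) :
    ∫⁻ x : Fin n → ℝ, ENNReal.ofReal ((∑ i, x i * θ i) ^ (2*q) * Real.exp (-∑ i, |x i|))
      = ENNReal.ofReal (((n + 2*q)! : ℝ)) *
        ∫⁻ x in {x : Fin n → ℝ | ∑ i, |x i| ≤ 1},
          ENNReal.ofReal ((∑ i, x i * θ i) ^ (2*q)) := by
  set P : (Fin n → ℝ) → ℝ := fun x => (∑ i, x i * θ i) ^ (2*q) with hPdef
  set N : (Fin n → ℝ) → ℝ := fun x => ∑ i, |x i| with hNdef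
  have hPc : Continuous P :=
    (continuous_finset_sum _ fun i _ => (continuous_apply i).mul continuous_const).pow _
  have hNc : Continuous N := continuous_finset_sum _ fun i _ => (continuous_apply i).abs
  have hP0 : ∀ x, 0 ≤ P x := fun x => (even_two_mul q).pow_nonneg _
  have hN0 : ∀ x, 0 ≤ N x := fun x => Finset.sum_nonneg fun i _ => abs_nonneg _
  set J : ℝ≥0∞ := ∫⁻ x in {x : Fin n → ℝ | N x ≤ 1}, ENNReal.ofReal (P x) with hJdef
  -- 1-d exponential tail
  have hexp1 : ∀ a : ℝ, ∫⁻ r in Set.Ici a, ENNReal.ofReal (Real.exp (-r))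
      = ENNReal.ofReal (Real.exp (-a)) := by
    intro a
    rw [← Measure.restrict_congr_set Ioi_ae_eq_Ici]
    have hInt : IntegrableOn (fun r : ℝ => Real.exp (-r)) (Set.Ioi a) := by
      have := exp_neg_integrableOn_Ioi a (zero_lt_one)
      simpa using this
    rw [← ofReal_integral_eq_lintegral_ofReal hInt (ae_of_all _ fun r => (Real.exp_pos _).le),
      integral_exp_neg_Ioi]
  -- measurable 2-var kernel
  set F : (Fin n → ℝ) × ℝ → ℝ≥0∞ := fun p =>
    Set.indicator {p : (Fin n → ℝ) × ℝ | N p.1 ≤ p.2}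
      (fun p => ENNReal.ofReal (P p.1) * ENNReal.ofReal (Real.exp (-p.2))) p with hFdef
  have hFmeas : Measurable F := by
    refine Measurable.indicator ?_ ?_
    · exact ((ENNReal.measurable_ofReal.comp (hPc.measurable.comp measurable_fst)).mul
        (ENNReal.measurable_ofReal.comp
          ((Real.continuous_exp.measurable).comp measurable_snd.neg)))
    · exact measurableSet_le (hNc.measurable.comp measurable_fst) measurable_snd
  -- pointwise layer representation
  have hrep : ∀ x : Fin n → ℝ, ENNReal.ofReal (P x * Real.exp (-N x))
      = ∫⁻ r : ℝ, F (x, r) := by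
    intro x
    rw [ENNReal.ofReal_mul (hP0 x), ← hexp1 (N x),
      ← lintegral_const_mul' _ _ ENNReal.ofReal_ne_top,
      ← lintegral_indicator measurableSet_Ici]
    refine lintegral_congr fun r => ?_
    simp only [hFdef]
    by_cases h : N x ≤ r
    · rw [Set.indicator_of_mem (Set.mem_Ici.2 h), Set.indicator_of_mem
        (show (x, r) ∈ {p : (Fin n → ℝ) × ℝ | N p.1 ≤ p.2} from h)]
    · rw [Set.indicator_of_notMem (fun hc => h (Set.mem_Ici.1 hc)),
        Set.indicator_of_notMem
        (show (x, r) ∉ {p : (Fin n → ℝ) × ℝ | N p.1 ≤ p.2} from h)]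
  -- inner x-integral for fixed r
  have hinner : ∀ r : ℝ, ∫⁻ x : Fin n → ℝ, F (x, r)
      = (∫⁻ x in {x : Fin n → ℝ | N x ≤ r}, ENNReal.ofReal (P x))
          * ENNReal.ofReal (Real.exp (-r)) := by
    intro r
    have h1 : ∀ x : Fin n → ℝ, F (x, r) = Set.indicator {x : Fin n → ℝ | N x ≤ r}
        (fun x => ENNReal.ofReal (P x) * ENNReal.ofReal (Real.exp (-r))) x := by
      intro x
      simp only [hFdef]
      by_cases h : N x ≤ r
      · rw [Set.indicator_of_mem (show (x, r) ∈ {p : (Fin n → ℝ) × ℝ | N p.1 ≤ p.2} from h),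
          Set.indicator_of_mem (show x ∈ {x : Fin n → ℝ | N x ≤ r} from h)]
      · rw [Set.indicator_of_notMem
          (show (x, r) ∉ {p : (Fin n → ℝ) × ℝ | N p.1 ≤ p.2} from h),
          Set.indicator_of_notMem (show x ∉ {x : Fin n → ℝ | N x ≤ r} from h)]
    rw [lintegral_congr h1, lintegral_indicator
      (measurableSet_le hNc.measurable measurable_const),
      lintegral_mul_const' _ _ ENNReal.ofReal_ne_top]
  -- scaling
  have hfin : Module.finrank ℝ (Fin n → ℝ) = n := by
    simp [Module.finrank_fintype_fun_eq_card]
  have hscale : ∀ r : ℝ, 0 < r → ∫⁻ x in {x : Fin n → ℝ | N x ≤ r}, ENNReal.ofReal (P x)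
      = ENNReal.ofReal (r ^ (n + 2*q)) * J := by
    intro r hr
    set g : (Fin n → ℝ) → ℝ≥0∞ :=
      Set.indicator {x : Fin n → ℝ | N x ≤ r} (fun x => ENNReal.ofReal (P x)) with hgdef
    have hgmeas : Measurable g :=
      Measurable.indicator (ENNReal.measurable_ofReal.comp hPc.measurable)
        (measurableSet_le hNc.measurable measurable_const)
    have hmap := Measure.map_addHaar_smul (volume : Measure (Fin n → ℝ)) (ne_of_gt hr)
    rw [hfin] at hmap
    have key : ∫⁻ x, g (r • x) = ENNReal.ofReal |(r^n)⁻¹| * ∫⁻ x, g x := by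
      rw [← lintegral_map hgmeas (measurable_const_smul r), hmap, lintegral_smul_measure, smul_eq_mul]
    have hpoint : ∀ x : Fin n → ℝ, g (r • x) = Set.indicator {x : Fin n → ℝ | N x ≤ 1}
        (fun x => ENNReal.ofReal (r ^ (2*q) * P x)) x := by
      intro x
      have hNs : N (r • x) = r * N x := by
        simp only [hNdef, Pi.smul_apply, smul_eq_mul, abs_mul, abs_of_pos hr, Finset.mul_sum]
      have hPs : P (r • x) = r ^ (2*q) * P x := by
        simp only [hPdef, Pi.smul_apply, smul_eq_mul]
        have : (∑ i, r * x i * θ i) = r * ∑ i, x i * θ i := by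
          rw [Finset.mul_sum]
          exact Finset.sum_congr rfl fun i _ => mul_assoc _ _ _
        rw [this, mul_pow]
      have hmem : (r • x ∈ {x : Fin n → ℝ | N x ≤ r}) ↔ (x ∈ {x : Fin n → ℝ | N x ≤ 1}) := by
        simp only [Set.mem_setOf_eq, hNs]
        constructor <;> intro h <;> nlinarith
      by_cases h : x ∈ {x : Fin n → ℝ | N x ≤ 1}
      · rw [hgdef, Set.indicator_of_mem (hmem.2 h), Set.indicator_of_mem h, hPs]
      · rw [hgdef, Set.indicator_of_notMem (fun hc => h (hmem.1 hc)),
          Set.indicator_of_notMem h]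
    have hsmulint : ∫⁻ x, g (r • x) = ENNReal.ofReal (r ^ (2*q)) * J := by
      rw [lintegral_congr hpoint, lintegral_indicator
        (measurableSet_le hNc.measurable measurable_const)]
      simp_rw [ENNReal.ofReal_mul (pow_nonneg hr.le _)]
      rw [lintegral_const_mul' _ _ ENNReal.ofReal_ne_top, hJdef]
    have hrn : (0:ℝ) < r ^ n := pow_pos hr n
    have hcancel : ENNReal.ofReal (r^n) * ENNReal.ofReal |(r^n)⁻¹| = 1 := by
      rw [abs_of_pos (inv_pos.2 hrn), ← ENNReal.ofReal_mul (pow_nonneg hr.le n),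
        mul_inv_cancel₀ hrn.ne', ENNReal.ofReal_one]
    have hglhs : ∫⁻ x in {x : Fin n → ℝ | N x ≤ r}, ENNReal.ofReal (P x) = ∫⁻ x, g x := by
      rw [hgdef, lintegral_indicator (measurableSet_le hNc.measurable measurable_const)]
    calc ∫⁻ x in {x : Fin n → ℝ | N x ≤ r}, ENNReal.ofReal (P x)
        = ∫⁻ x, g x := hglhs
      _ = (ENNReal.ofReal (r^n) * ENNReal.ofReal |(r^n)⁻¹|) * ∫⁻ x, g x := by
          rw [hcancel, one_mul]
      _ = ENNReal.ofReal (r^n) * (ENNReal.ofReal |(r^n)⁻¹| * ∫⁻ x, g x) := by rw [mul_assoc]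
      _ = ENNReal.ofReal (r^n) * ∫⁻ x, g (r • x) := by rw [← key]
      _ = ENNReal.ofReal (r^n) * (ENNReal.ofReal (r ^ (2*q)) * J) := by rw [hsmulint]
      _ = ENNReal.ofReal (r ^ (n + 2*q)) * J := by
          rw [← mul_assoc, ← ENNReal.ofReal_mul (pow_nonneg hr.le n), ← pow_add]
  -- Gamma integral
  have hGamma : ∫⁻ r in Set.Ioi (0:ℝ), ENNReal.ofReal (Real.exp (-r) * r ^ (n + 2*q))
      = ENNReal.ofReal (((n + 2*q)! : ℝ)) := by
    set m := n + 2*q with hm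
    have hInt : IntegrableOn (fun r : ℝ => Real.exp (-r) * r ^ m) (Set.Ioi 0) := by
      have h := Real.GammaIntegral_convergent (s := m + 1) (by positivity)
      refine h.congr_fun (fun x hx => ?_) measurableSet_Ioi
      rw [add_sub_cancel_right]; dsimp only; rw [Real.rpow_natCast]
    rw [← ofReal_integral_eq_lintegral_ofReal hInt ((ae_restrict_iff' measurableSet_Ioi).2
      (ae_of_all _ fun r hr => mul_nonneg (Real.exp_pos _).le (pow_nonneg hr.le _)))]
    congr 1
    have h := Real.Gamma_eq_integral (s := (m : ℝ) + 1) (by positivity)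
    rw [Real.Gamma_nat_eq_factorial m] at h
    rw [h]
    refine setIntegral_congr_fun measurableSet_Ioi (fun x hx => ?_)
    rw [add_sub_cancel_right, Real.rpow_natCast]
  -- assemble
  calc ∫⁻ x : Fin n → ℝ, ENNReal.ofReal (P x * Real.exp (-N x))
      = ∫⁻ x : Fin n → ℝ, ∫⁻ r : ℝ, F (x, r) := lintegral_congr hrep
    _ = ∫⁻ r : ℝ, ∫⁻ x : Fin n → ℝ, F (x, r) := lintegral_lintegral_swap hFmeas.aemeasurable
    _ = ∫⁻ r : ℝ, (∫⁻ x in {x : Fin n → ℝ | N x ≤ r}, ENNReal.ofReal (P x))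
          * ENNReal.ofReal (Real.exp (-r)) := lintegral_congr hinner
    _ = ENNReal.ofReal (((n + 2*q)! : ℝ)) * J := by
        set G : ℝ → ℝ≥0∞ := fun r => (∫⁻ x in {x : Fin n → ℝ | N x ≤ r},
          ENNReal.ofReal (P x)) * ENNReal.ofReal (Real.exp (-r)) with hGdef
        have hsplit := lintegral_add_compl (μ := volume) G (measurableSet_Iio (a := (0:ℝ)))
        rw [compl_Iio] at hsplit
        have hIio : ∫⁻ r in Set.Iio (0:ℝ), G r = 0 := by
          have : ∀ᵐ r ∂(volume.restrict (Set.Iio (0:ℝ))), G r = 0 := by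
            refine (ae_restrict_iff' measurableSet_Iio).2 (ae_of_all _ fun r hr => ?_)
            have hempty : {x : Fin n → ℝ | N x ≤ r} = ∅ := by
              ext x
              simp only [Set.mem_setOf_eq, Set.mem_empty_iff_false, iff_false, not_le]
              exact lt_of_lt_of_le hr (hN0 x)
            rw [hGdef]
            simp only
            rw [hempty, Measure.restrict_empty, lintegral_zero_measure, zero_mul]
          rw [lintegral_congr_ae this, lintegral_zero]
        have hIci : ∫⁻ r in Set.Ici (0:ℝ), G r = ENNReal.ofReal (((n + 2*q)! : ℝ)) * J := by
          rw [← Measure.restrict_congr_set Ioi_ae_eq_Ici]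
          have hcong : ∀ᵐ r ∂(volume.restrict (Set.Ioi (0:ℝ))),
              G r = ENNReal.ofReal (Real.exp (-r) * r ^ (n + 2*q)) * J := by
            refine (ae_restrict_iff' measurableSet_Ioi).2 (ae_of_all _ fun r hr => ?_)
            rw [hGdef]
            simp only
            rw [hscale r hr, ENNReal.ofReal_mul (Real.exp_pos _).le]
            ring
          rw [lintegral_congr_ae hcong, lintegral_mul_const _ (by
            exact (ENNReal.measurable_ofReal.comp ((Real.continuous_exp.comp
              continuous_neg).mul (continuous_pow _)).measurable)), hGamma]
        rw [← hsplit, hIio, hIci, zero_add]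

lemma volS (n : ℕ) (hn : 1 ≤ n) :
    volume {x : Fin n → ℝ | ∑ i, |x i| ≤ 1} = ENNReal.ofReal ((2:ℝ)^n / (n ! : ℝ)) := by
  haveI : NeZero n := ⟨by omega⟩
  have h := MeasureTheory.volume_sum_rpow_le (ι := Fin n) (p := 1) le_rfl 1
  have hset : {x : Fin n → ℝ | (∑ i, |x i| ^ (1:ℝ)) ^ (1/(1:ℝ)) ≤ 1}
      = {x : Fin n → ℝ | ∑ i, |x i| ≤ 1} := by
    ext x; simp [Real.rpow_one]
  rw [hset] at h
  rw [h]
  simp only [Fintype.card_fin, ENNReal.ofReal_one, one_pow, one_mul]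
  congr 1
  rw [show (1/(1:ℝ) + 1) = ((1:ℕ) : ℝ) + 1 by norm_num, Real.Gamma_nat_eq_factorial,
    show ((n:ℝ)/1 + 1) = ((n:ℕ) : ℝ) + 1 by norm_num, Real.Gamma_nat_eq_factorial]
  norm_num


/-- Moment bound for linear functionals with respect to the uniform probability
measure on the unit `ℓ¹`-ball: for `α = √n·‖θ‖_∞`,
`∫ |⟨x,θ⟩|^{2q} dν ≤ binom(n+q−1, n−1)·n!·(2q)!·α^{2q} / ((n+2q)!·n^q)`. -/
theorem moment_bound_uniform_l1_ball (n : ℕ) (hn : 1 ≤ n) (q : ℕ) (hq : 1 ≤ q)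
    (θ : Fin n → ℝ) :
    ∫ x, |∑ i, x i * θ i| ^ (2 * q)
        ∂((volume {x : Fin n → ℝ | ∑ i, |x i| ≤ 1})⁻¹ •
          volume.restrict {x : Fin n → ℝ | ∑ i, |x i| ≤ 1}) ≤
      (Nat.choose (n + q - 1) (n - 1) : ℝ) * (Nat.factorial n : ℝ) *
        (Nat.factorial (2 * q) : ℝ) * (Real.sqrt n * (⨆ i, |θ i|)) ^ (2 * q) /
        ((Nat.factorial (n + 2 * q) : ℝ) * (n : ℝ) ^ q) := by
  haveI : NeZero n := ⟨by omega⟩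
  set M : ℝ := ⨆ i, |θ i| with hMdef
  have hM : ∀ i, |θ i| ≤ M := fun i => le_ciSup (f := fun i => |θ i|) (Set.Finite.bddAbove (Set.finite_range _)) i
  have hM0 : 0 ≤ M := (abs_nonneg _).trans (hM 0)
  have hP0 : ∀ x : Fin n → ℝ, 0 ≤ (∑ i, x i * θ i) ^ (2*q) :=
    fun x => (even_two_mul q).pow_nonneg _
  obtain ⟨hEint, hEval⟩ := expansion n q θ
  set E : ℝ := ∫ x : Fin n → ℝ, (∑ i, x i * θ i) ^ (2*q) * Real.exp (-∑ i, |x i|) with hEdef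
  have hE0 : 0 ≤ E :=
    integral_nonneg fun x => mul_nonneg (hP0 x) (Real.exp_pos _).le
  have hEb : E ≤ (Nat.choose (n + q - 1) q : ℝ) * (2:ℝ)^n * ((2*q)! : ℝ) * M^(2*q) := by
    rw [hEval]; exact sum_bound n q hn θ M hM
  set J : ℝ≥0∞ := ∫⁻ x in {x : Fin n → ℝ | ∑ i, |x i| ≤ 1},
    ENNReal.ofReal ((∑ i, x i * θ i) ^ (2*q)) with hJdef
  have hA := stepA n q hn θ
  have hof : ∫⁻ x : Fin n → ℝ,
      ENNReal.ofReal ((∑ i, x i * θ i) ^ (2*q) * Real.exp (-∑ i, |x i|))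
      = ENNReal.ofReal E := (ofReal_integral_eq_lintegral_ofReal hEint
        (ae_of_all _ fun x => mul_nonneg (hP0 x) (Real.exp_pos _).le)).symm
  have hfac0 : (0:ℝ) < ((n + 2*q)! : ℝ) := by
    exact_mod_cast Nat.factorial_pos _
  have hJ : J = ENNReal.ofReal (E / ((n + 2*q)! : ℝ)) := by
    have hne0 : ENNReal.ofReal (((n + 2*q)! : ℝ)) ≠ 0 := by
      simp only [ne_eq, ENNReal.ofReal_eq_zero, not_le]
      exact hfac0
    refine (ENNReal.mul_right_inj hne0 ENNReal.ofReal_ne_top).1 ?_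
    rw [hJdef, ← hA, hof, ← ENNReal.ofReal_mul hfac0.le]
    congr 1
    field_simp
  -- evaluate LHS
  have hcont : Continuous (fun x : Fin n → ℝ => (∑ i, x i * θ i) ^ (2*q)) :=
    (continuous_finset_sum _ fun i _ => (continuous_apply i).mul continuous_const).pow _
  have habs : (fun x : Fin n → ℝ => |∑ i, x i * θ i| ^ (2*q))
      = fun x : Fin n → ℝ => (∑ i, x i * θ i) ^ (2*q) := by
    funext x; exact (even_two_mul q).pow_abs _
  have hL : ∫ x, |∑ i, x i * θ i| ^ (2 * q)
        ∂((volume {x : Fin n → ℝ | ∑ i, |x i| ≤ 1})⁻¹ •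
          volume.restrict {x : Fin n → ℝ | ∑ i, |x i| ≤ 1})
      = ((n ! : ℝ) / 2^n) * (E / ((n + 2*q)! : ℝ)) := by
    rw [integral_smul_measure, habs]
    have h2 : ∫ x in {x : Fin n → ℝ | ∑ i, |x i| ≤ 1}, (∑ i, x i * θ i) ^ (2*q)
        = J.toReal := by
      rw [integral_eq_lintegral_of_nonneg_ae (ae_of_all _ fun x => hP0 x)
        hcont.aestronglyMeasurable.restrict, hJdef]
    have h3 : J.toReal = E / ((n + 2*q)! : ℝ) := by
      rw [hJ, ENNReal.toReal_ofReal (by positivity)]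
    have h4 : ((volume {x : Fin n → ℝ | ∑ i, |x i| ≤ 1})⁻¹).toReal = (n ! : ℝ) / 2^n := by
      rw [volS n hn, ENNReal.toReal_inv, ENNReal.toReal_ofReal (by positivity), inv_div]
    rw [h2, h3, h4, smul_eq_mul]
  rw [hL]
  have hchoose : (Nat.choose (n + q - 1) (n-1) : ℝ) = (Nat.choose (n + q - 1) q : ℝ) := by
    congr 1
    rw [← Nat.choose_symm (by omega : q ≤ n + q - 1)]
    congr 1
    omega
  have hsqrt : (Real.sqrt n * M) ^ (2*q) = (n:ℝ)^q * M^(2*q) := by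
    rw [mul_pow, pow_mul, Real.sq_sqrt (Nat.cast_nonneg n)]
  have hnq : (0:ℝ) < (n:ℝ)^q := by positivity
  have h2n : (0:ℝ) < (2:ℝ)^n := by positivity
  have hnf : (0:ℝ) < (n ! : ℝ) := by exact_mod_cast Nat.factorial_pos _
  calc ((n ! : ℝ) / 2^n) * (E / ((n + 2*q)! : ℝ))
      ≤ ((n ! : ℝ) / 2^n) *
        (((Nat.choose (n + q - 1) q : ℝ) * (2:ℝ)^n * ((2*q)! : ℝ) * M^(2*q))
          / ((n + 2*q)! : ℝ)) := by gcongr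
    _ = (Nat.choose (n + q - 1) (n-1) : ℝ) * (n ! : ℝ) * ((2*q)! : ℝ)
          * (Real.sqrt n * M) ^ (2*q) / (((n + 2*q)! : ℝ) * (n:ℝ)^q) := by
        rw [hchoose, hsqrt]
        field_simp
    _ = (Nat.choose (n + q - 1) (n - 1) : ℝ) * (Nat.factorial n : ℝ) *
        (Nat.factorial (2 * q) : ℝ) * (Real.sqrt n * (⨆ i, |θ i|)) ^ (2 * q) /
        ((Nat.factorial (n + 2 * q) : ℝ) * (n : ℝ) ^ q) := by rw [hMdef]
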